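/- arXiv:2408.03199 — 8 statements merged into one kernel-verified Lean document; each statement's English description precedes it below -/
import Mathlib

section
/- Let φ : ℝⁿ → ℝ be differentiable with L-Lipschitz-continuous gradient (L > 0). Let x, d ∈ ℝⁿ, set g = ∇φ(x), and suppose there are constants c₁, c₂ > 0 with ‖d‖ ≤ c₁‖g‖ and ⟨d, g⟩ ≤ −c₂‖g‖². Let γ ∈ (0,1). Then for every step size α with 0 ≤ α ≤ 2c₂(1−γ)/(c₁²L), the Armijo condition φ(x + α·d) ≤ φ(x) + γ α ⟨d, g⟩ holds. -/
set_option maxHeartbeats 1000000 in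
/-- Finite termination interval of the Armijo condition under SGR directions. -/
theorem armijo_holds_for_small_steps
    (n : ℕ) (φ : EuclideanSpace ℝ (Fin n) → ℝ) (L : ℝ) (hL : 0 < L)
    (hdiff : Differentiable ℝ φ)
    (hlip : ∀ y z : EuclideanSpace ℝ (Fin n), ‖gradient φ y - gradient φ z‖ ≤ L * ‖y - z‖)
    (x d : EuclideanSpace ℝ (Fin n)) (c₁ c₂ : ℝ) (hc₁ : 0 < c₁) (hc₂ : 0 < c₂)
    (hd1 : ‖d‖ ≤ c₁ * ‖gradient φ x‖)
    (hd2 : (inner ℝ d (gradient φ x) : ℝ) ≤ -c₂ * ‖gradient φ x‖ ^ 2)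
    (γ : ℝ) (hγ : γ ∈ Set.Ioo (0 : ℝ) 1)
    (α : ℝ) (hα0 : 0 ≤ α) (hα : α ≤ 2 * c₂ * (1 - γ) / (c₁ ^ 2 * L)) :
    φ (x + α • d) ≤ φ x + γ * α * (inner ℝ d (gradient φ x) : ℝ) := by
  set g := gradient φ x with hg
  -- gradient is continuous (Lipschitz)
  have hgradcont : Continuous (fun y => gradient φ y) := by
    have : LipschitzWith (Real.toNNReal L) (fun y => gradient φ y) := by
      apply LipschitzWith.of_dist_le_mul
      intro y z
      rw [Real.coe_toNNReal L hL.le]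
      simpa [dist_eq_norm] using hlip y z
    exact this.continuous
  -- derivative of ψ t = φ (x + t • d)
  have hψ : ∀ t : ℝ, HasDerivAt (fun t : ℝ => φ (x + t • d))
      ((inner ℝ (gradient φ (x + t • d)) d : ℝ)) t := by
    intro t
    have hline : HasDerivAt (fun t : ℝ => x + t • d) d t := by
      simpa using ((hasDerivAt_id t).smul_const d).const_add x
    have hgr : HasGradientAt φ (gradient φ (x + t • d)) (x + t • d) :=
      ((hdiff (x + t • d)).hasGradientAt)
    have := (hgr.hasFDerivAt).comp_hasDerivAt t hline
    exact this
  have hcont : Continuous (fun t : ℝ => (inner ℝ (gradient φ (x + t • d)) d : ℝ)) := by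
    exact (continuous_inner.comp (((hgradcont.comp
      (continuous_const.add (continuous_id.smul continuous_const)))).prodMk
      continuous_const))
  -- FTC
  have hftc : φ (x + α • d) - φ x
      = ∫ t in (0:ℝ)..α, (inner ℝ (gradient φ (x + t • d)) d : ℝ) := by
    have := intervalIntegral.integral_eq_sub_of_hasDerivAt
      (f := fun t : ℝ => φ (x + t • d)) (a := (0:ℝ)) (b := α)
      (fun t _ => hψ t) (hcont.intervalIntegrable 0 α)
    rw [this]
    norm_num
  -- pointwise bound on the integrand
  have hbound : ∀ t ∈ Set.Icc (0:ℝ) α,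
      (inner ℝ (gradient φ (x + t • d)) d : ℝ) ≤ (inner ℝ g d : ℝ) + L * t * ‖d‖ ^ 2 := by
    intro t ht
    have h1 : (inner ℝ (gradient φ (x + t • d)) d : ℝ) - (inner ℝ g d : ℝ)
        = (inner ℝ (gradient φ (x + t • d) - g) d : ℝ) := by
      rw [inner_sub_left]
    have h2 : (inner ℝ (gradient φ (x + t • d) - g) d : ℝ)
        ≤ ‖gradient φ (x + t • d) - g‖ * ‖d‖ := real_inner_le_norm _ _
    have h3 : ‖gradient φ (x + t • d) - g‖ ≤ L * (t * ‖d‖) := by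
      have := hlip (x + t • d) x
      simpa [norm_smul, abs_of_nonneg ht.1] using this
    nlinarith [norm_nonneg d, norm_nonneg (gradient φ (x + t • d) - g), ht.1, hL.le,
      mul_le_mul_of_nonneg_right h3 (norm_nonneg d)]
  -- integral bound
  have hint : (∫ t in (0:ℝ)..α, (inner ℝ (gradient φ (x + t • d)) d : ℝ))
      ≤ ∫ t in (0:ℝ)..α, ((inner ℝ g d : ℝ) + L * t * ‖d‖ ^ 2) := by
    apply intervalIntegral.integral_mono_on hα0
      (hcont.intervalIntegrable 0 α)
      ((by fun_prop : Continuous fun t : ℝ => (inner ℝ g d : ℝ) + L * t * ‖d‖ ^ 2).intervalIntegrable 0 α) hbound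
  have hval : (∫ t in (0:ℝ)..α, ((inner ℝ g d : ℝ) + L * t * ‖d‖ ^ 2))
      = α * (inner ℝ g d : ℝ) + L * (α ^ 2 / 2) * ‖d‖ ^ 2 := by
    rw [intervalIntegral.integral_add (intervalIntegrable_const)
      ((by fun_prop : Continuous fun t : ℝ => L * t * ‖d‖ ^ 2).intervalIntegrable 0 α)]
    simp only [intervalIntegral.integral_const, smul_eq_mul, sub_zero]
    have : (∫ t in (0:ℝ)..α, L * t * ‖d‖ ^ 2) = (L * ‖d‖ ^ 2) * ∫ t in (0:ℝ)..α, t := by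
      rw [← intervalIntegral.integral_const_mul]
      congr 1; ext t; ring
    rw [this, integral_id]
    ring
  -- descent lemma
  have hdesc : φ (x + α • d) ≤ φ x + α * (inner ℝ g d : ℝ) + L * α ^ 2 / 2 * ‖d‖ ^ 2 := by
    have := hftc.le.trans (hint.trans hval.le)
    linarith
  -- symmetry of inner
  have hsym : (inner ℝ g d : ℝ) = (inner ℝ d g : ℝ) := real_inner_comm _ _
  rw [hsym] at hdesc
  -- final algebra
  have hγ1 : γ < 1 := hγ.2
  have hγ0 : 0 < γ := hγ.1
  have hden : 0 < c₁ ^ 2 * L := by positivity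
  have hα' : α * (c₁ ^ 2 * L) ≤ 2 * c₂ * (1 - γ) := by
    rw [← le_div_iff₀ hden]; exact hα
  have hd1' : ‖d‖ ^ 2 ≤ c₁ ^ 2 * ‖g‖ ^ 2 := by
    nlinarith [norm_nonneg d, norm_nonneg g, hc₁.le]
  have key : α * (inner ℝ d g : ℝ) + L * α ^ 2 / 2 * ‖d‖ ^ 2 ≤ γ * α * (inner ℝ d g : ℝ) := by
    generalize hI : (inner ℝ d g : ℝ) = I at hd2 ⊢
    generalize hG : ‖g‖ = G at hd1' hd2 ⊢
    generalize hD : ‖d‖ = D at hd1' ⊢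
    have hGnn : 0 ≤ G := hG ▸ norm_nonneg g
    have h1 : L * α ^ 2 / 2 * D ^ 2 ≤ L * α ^ 2 / 2 * (c₁ ^ 2 * G ^ 2) :=
      mul_le_mul_of_nonneg_left hd1' (by positivity)
    have h2 : α * (c₁ ^ 2 * L) * (α * G ^ 2 / 2) ≤ 2 * c₂ * (1 - γ) * (α * G ^ 2 / 2) :=
      mul_le_mul_of_nonneg_right hα' (by positivity)
    have h3 : (1 - γ) * α * I ≤ (1 - γ) * α * (-c₂ * G ^ 2) :=
      mul_le_mul_of_nonneg_left hd2 (by nlinarith)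
    nlinarith [h1, h2, h3]
  linarith
end

section
/- Let φ : ℝⁿ → ℝ be differentiable with L-Lipschitz-continuous gradient (L > 0), let x, d ∈ ℝⁿ with g = ∇φ(x), and suppose ‖d‖ ≤ c₁‖g‖ and ⟨d, g⟩ ≤ −c₂‖g‖² for constants c₁, c₂ > 0. Let γ ∈ (0,1), δ ∈ (0,1), and let the initial step size satisfy 0 < α₀ ≤ α_max. Set α_low = 2c₂(1−γ)/(c₁²L). Let j* be the least nonnegative integer j such that the Armijo condition φ(x + α₀δʲ·d) ≤ φ(x) + γ α₀ δʲ ⟨d, g⟩ holds. Then j* ≤ max{0, ⌈log_{1/δ}(α_max/α_low)⌉}. -/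
open InnerProductSpace in
lemma my_descent {F : Type*} [NormedAddCommGroup F] [InnerProductSpace ℝ F] [CompleteSpace F]
    (φ : F → ℝ) (L : ℝ) (hL : 0 ≤ L)
    (hdiff : Differentiable ℝ φ)
    (hlip : ∀ y z : F, ‖gradient φ y - gradient φ z‖ ≤ L * ‖y - z‖)
    (x v : F) :
    φ (x + v) ≤ φ x + (inner ℝ (gradient φ x) v : ℝ) + L / 2 * ‖v‖ ^ 2 := by
  set ψ' : ℝ → ℝ := fun t => (inner ℝ (gradient φ (x + t • v)) v : ℝ) with hψ'
  have hline : ∀ t : ℝ, HasDerivAt (fun t : ℝ => x + t • v) v t := by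
    intro t
    simpa using ((hasDerivAt_id t).smul_const v).const_add x
  have hderiv : ∀ t : ℝ, HasDerivAt (fun t : ℝ => φ (x + t • v)) (ψ' t) t := by
    intro t
    have h1 := ((hdiff (x + t • v)).hasGradientAt.hasFDerivAt).comp_hasDerivAt t (hline t)
    rw [toDual_apply_apply] at h1
    exact h1
  have hgc : Continuous (gradient φ) := by
    refine (LipschitzWith.of_dist_le_mul (K := L.toNNReal) ?_).continuous
    intro a b
    rw [dist_eq_norm, dist_eq_norm, Real.coe_toNNReal L hL]
    exact hlip a b
  have hcont : Continuous ψ' := by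
    exact (hgc.comp (continuous_const.add ((continuous_id).smul continuous_const))).inner
      continuous_const
  have hint : φ (x + (1:ℝ) • v) - φ (x + (0:ℝ) • v) = ∫ t in (0:ℝ)..1, ψ' t := by
    symm
    exact intervalIntegral.integral_eq_sub_of_hasDerivAt (fun t _ => hderiv t)
      (hcont.intervalIntegrable 0 1)
  have hbound : ∀ t ∈ Set.Icc (0:ℝ) 1, ψ' t ≤ ψ' 0 + L * t * ‖v‖ ^ 2 := by
    intro t ht
    have h1 : ψ' t - ψ' 0 = (inner ℝ (gradient φ (x + t • v) - gradient φ (x + (0:ℝ) • v)) v : ℝ) := by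
      simp [hψ', inner_sub_left]
    have h2 : (inner ℝ (gradient φ (x + t • v) - gradient φ (x + (0:ℝ) • v)) v : ℝ)
        ≤ ‖gradient φ (x + t • v) - gradient φ (x + (0:ℝ) • v)‖ * ‖v‖ :=
      real_inner_le_norm _ _
    have h3 : ‖gradient φ (x + t • v) - gradient φ (x + (0:ℝ) • v)‖ ≤ L * (t * ‖v‖) := by
      have := hlip (x + t • v) (x + (0:ℝ) • v)
      have he : x + t • v - (x + (0:ℝ) • v) = t • v := by abel_nf; simp
      rw [he, norm_smul, Real.norm_eq_abs, abs_of_nonneg ht.1] at this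
      exact this
    nlinarith [norm_nonneg v, mul_le_mul_of_nonneg_right h3 (norm_nonneg v)]
  have hmono : (∫ t in (0:ℝ)..1, ψ' t) ≤ ∫ t in (0:ℝ)..1, (ψ' 0 + L * t * ‖v‖ ^ 2) := by
    apply intervalIntegral.integral_mono_on (by norm_num) (hcont.intervalIntegrable 0 1)
    · exact (Continuous.intervalIntegrable (by continuity) 0 1)
    · exact hbound
  have hcalc : (∫ t in (0:ℝ)..1, (ψ' 0 + L * t * ‖v‖ ^ 2)) = ψ' 0 + L / 2 * ‖v‖ ^ 2 := by
    rw [intervalIntegral.integral_add (intervalIntegrable_const)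
      (Continuous.intervalIntegrable (by continuity) 0 1)]
    simp [intervalIntegral.integral_comp_mul_right, mul_comm, mul_assoc]
    ring
  have h0 : ψ' 0 = (inner ℝ (gradient φ x) v : ℝ) := by simp [hψ']
  simp only [one_smul, zero_smul, add_zero] at hint
  linarith [hint, hmono.trans_eq hcalc]

/-- Upper bound on the number of backtracking steps of the Armijo line search. -/
theorem backtracking_count_upper_bound
    (n : ℕ) (φ : EuclideanSpace ℝ (Fin n) → ℝ) (L : ℝ) (hL : 0 < L)
    (hdiff : Differentiable ℝ φ)
    (hlip : ∀ y z : EuclideanSpace ℝ (Fin n), ‖gradient φ y - gradient φ z‖ ≤ L * ‖y - z‖)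
    (x d : EuclideanSpace ℝ (Fin n)) (c₁ c₂ : ℝ) (hc₁ : 0 < c₁) (hc₂ : 0 < c₂)
    (hd1 : ‖d‖ ≤ c₁ * ‖gradient φ x‖)
    (hd2 : (inner ℝ d (gradient φ x) : ℝ) ≤ -c₂ * ‖gradient φ x‖ ^ 2)
    (γ δ : ℝ) (hγ : γ ∈ Set.Ioo (0 : ℝ) 1) (hδ : δ ∈ Set.Ioo (0 : ℝ) 1)
    (α₀ αmax : ℝ) (hα₀ : 0 < α₀) (hα₀max : α₀ ≤ αmax)
    (αlow : ℝ) (hαlow : αlow = 2 * c₂ * (1 - γ) / (c₁ ^ 2 * L))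
    (jstar : ℕ)
    (hjstar : IsLeast {j : ℕ |
      φ (x + (α₀ * δ ^ j) • d) ≤ φ x + γ * (α₀ * δ ^ j) * (inner ℝ d (gradient φ x) : ℝ)} jstar) :
    (jstar : ℤ) ≤ max 0 ⌈Real.logb (1 / δ) (αmax / αlow)⌉ := by
  obtain ⟨hγ0, hγ1⟩ := hγ
  obtain ⟨hδ0, hδ1⟩ := hδ
  have hαlow_pos : 0 < αlow := by
    rw [hαlow]
    exact div_pos (by nlinarith) (by positivity)
  -- Armijo holds whenever the step size is at most αlow
  have harmijo : ∀ j : ℕ, α₀ * δ ^ j ≤ αlow →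
      φ (x + (α₀ * δ ^ j) • d) ≤ φ x + γ * (α₀ * δ ^ j) * (inner ℝ d (gradient φ x) : ℝ) := by
    intro j hj
    set α : ℝ := α₀ * δ ^ j with hα
    have hαpos : 0 < α := by positivity
    have hdes := my_descent φ L hL.le hdiff hlip x (α • d)
    have hipd : (inner ℝ (gradient φ x) (α • d) : ℝ) = α * (inner ℝ d (gradient φ x) : ℝ) := by
      rw [real_inner_smul_right, real_inner_comm]
    rw [hipd, norm_smul, Real.norm_eq_abs, abs_of_pos hαpos] at hdes
    have hαlow' : α * (c₁ ^ 2 * L) ≤ 2 * c₂ * (1 - γ) := by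
      rw [hαlow] at hj
      calc α * (c₁ ^ 2 * L) ≤ (2 * c₂ * (1 - γ) / (c₁ ^ 2 * L)) * (c₁ ^ 2 * L) := by
            apply mul_le_mul_of_nonneg_right hj (by positivity)
        _ = 2 * c₂ * (1 - γ) := by field_simp
    have hng : (0:ℝ) ≤ ‖gradient φ x‖ := norm_nonneg _
    have hnd : (0:ℝ) ≤ ‖d‖ := norm_nonneg _
    -- key inequality: α ⟨d,g⟩ + L/2 α² ‖d‖² ≤ γ α ⟨d,g⟩
    have h1 : ‖d‖ ^ 2 ≤ c₁ ^ 2 * ‖gradient φ x‖ ^ 2 := by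
      nlinarith [mul_le_mul hd1 hd1 hnd (by positivity : (0:ℝ) ≤ c₁ * ‖gradient φ x‖)]
    nlinarith [mul_le_mul_of_nonneg_left h1 (by positivity : (0:ℝ) ≤ L / 2 * α ^ 2),
      mul_le_mul_of_nonneg_left
        (mul_le_mul_of_nonneg_right hαlow' (sq_nonneg ‖gradient φ x‖))
        (by positivity : (0:ℝ) ≤ α / 2),
      mul_le_mul_of_nonneg_left hd2
        (mul_nonneg hαpos.le (by linarith) : (0:ℝ) ≤ α * (1 - γ))]
  -- the candidate index
  set J : ℤ := max 0 ⌈Real.logb (1 / δ) (αmax / αlow)⌉ with hJ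
  have hJ0 : 0 ≤ J := le_max_left _ _
  set j : ℕ := J.toNat with hj
  have hjJ : (j : ℤ) = J := Int.toNat_of_nonneg hJ0
  have hαmax_pos : 0 < αmax := lt_of_lt_of_le hα₀ hα₀max
  have hstep : α₀ * δ ^ j ≤ αlow := by
    by_cases hr : αmax / αlow ≤ 1
    · have h1 : αmax ≤ αlow := (div_le_one hαlow_pos).mp hr
      have h2 : δ ^ j ≤ 1 := pow_le_one₀ hδ0.le hδ1.le
      calc α₀ * δ ^ j ≤ α₀ * 1 := by nlinarith
        _ ≤ αlow := by linarith
    · push_neg at hr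
      set b : ℝ := 1 / δ with hb
      have hb1 : 1 < b := one_lt_one_div hδ0 hδ1
      have hb0 : 0 < b := by positivity
      have hlogle : Real.logb b (αmax / αlow) ≤ (j : ℝ) := by
        have h1 : (⌈Real.logb b (αmax / αlow)⌉ : ℝ) ≥ Real.logb b (αmax / αlow) := Int.le_ceil _
        have h2 : (⌈Real.logb b (αmax / αlow)⌉ : ℤ) ≤ J := le_max_right _ _
        have : ((⌈Real.logb b (αmax / αlow)⌉ : ℤ) : ℝ) ≤ ((J : ℤ) : ℝ) := by exact_mod_cast h2
        rw [← hjJ] at this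
        push_cast at this
        linarith
      have hbj : αmax / αlow ≤ b ^ j := by
        have h1 : b ^ (Real.logb b (αmax / αlow)) ≤ b ^ (j : ℝ) :=
          Real.rpow_le_rpow_of_exponent_le hb1.le hlogle
        rw [Real.rpow_logb hb0 (ne_of_gt hb1) (by positivity), Real.rpow_natCast] at h1
        exact h1
      have hδb : δ = 1 / b := by rw [hb]; field_simp
      have hbjpos : 0 < b ^ j := by positivity
      have hδj : δ ^ j = 1 / b ^ j := by rw [hδb, one_div, inv_pow, ← one_div]
      have h2 : δ ^ j ≤ αlow / αmax := by
        rw [hδj, div_le_div_iff₀ hbjpos hαmax_pos] at *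
        calc 1 * αmax = αmax := one_mul _
          _ ≤ αlow * (b ^ j) := by
              rw [div_le_iff₀ hαlow_pos] at hbj
              linarith [hbj]
          _ = αlow * b ^ j := rfl
      calc α₀ * δ ^ j ≤ αmax * (αlow / αmax) := by
            apply mul_le_mul hα₀max h2 (by positivity) hαmax_pos.le
        _ = αlow := by field_simp
  have hmem : j ∈ {j : ℕ |
      φ (x + (α₀ * δ ^ j) • d) ≤ φ x + γ * (α₀ * δ ^ j) * (inner ℝ d (gradient φ x) : ℝ)} :=
    harmijo j hstep
  have : jstar ≤ j := hjstar.2 hmem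
  calc (jstar : ℤ) ≤ (j : ℤ) := by exact_mod_cast this
    _ = J := hjJ
end

section
/- Let (Ω, 𝓕, P) be a probability space and let d, g : Ω → ℝⁿ be square-integrable random vectors with G := E[g]. Suppose: (i) ‖d(ω)‖ ≤ c₁‖g(ω)‖ and ⟨d(ω), g(ω)⟩ ≤ −c₂‖g(ω)‖² almost surely, with c₁, c₂ > 0; (ii) E[‖g‖²] ≤ ρ‖G‖² with ρ > 0; (iii) Cov(d, g) ≥ −c₃ Var(g) with c₃ > 0; and (iv) c₂ > c₃(1 − 1/ρ). Then ⟨E[d], G⟩ ≤ −(c₂ − c₃(1 − 1/ρ)) ‖G‖². -/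
open MeasureTheory

/-- Expected directional derivative bound under SGR, strong growth and a
covariance lower bound (Lemma on Bottou-like conditions). -/
theorem expected_direction_inner_bound
    {Ω : Type*} [MeasurableSpace Ω] (P : Measure Ω) [IsProbabilityMeasure P]
    (n : ℕ) (d g : Ω → EuclideanSpace ℝ (Fin n))
    (hd2 : MemLp d 2 P) (hg2 : MemLp g 2 P)
    (G : EuclideanSpace ℝ (Fin n)) (hG : G = ∫ ω, g ω ∂P)
    (c₁ c₂ c₃ ρ : ℝ) (hc₁ : 0 < c₁) (hc₂ : 0 < c₂) (hc₃ : 0 < c₃) (hρ : 0 < ρ)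
    (hsgr : ∀ᵐ ω ∂P, ‖d ω‖ ≤ c₁ * ‖g ω‖ ∧
      (inner ℝ (d ω) (g ω) : ℝ) ≤ -c₂ * ‖g ω‖ ^ 2)
    (hSGC : ∫ ω, ‖g ω‖ ^ 2 ∂P ≤ ρ * ‖G‖ ^ 2)
    (hCov : (∫ ω, (inner ℝ (d ω) (g ω) : ℝ) ∂P) - (inner ℝ (∫ ω, d ω ∂P) G : ℝ) ≥
      -c₃ * ((∫ ω, ‖g ω‖ ^ 2 ∂P) - ‖G‖ ^ 2))
    (hc : c₂ > c₃ * (1 - 1 / ρ)) :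
    (inner ℝ (∫ ω, d ω ∂P) G : ℝ) ≤ -(c₂ - c₃ * (1 - 1 / ρ)) * ‖G‖ ^ 2 := by
  set V : ℝ := ∫ ω, ‖g ω‖ ^ 2 ∂P with hV
  set h : ℝ := ‖G‖ ^ 2 with hh
  -- integrability facts
  have hg_sq_int : Integrable (fun ω => ‖g ω‖ ^ 2) P := hg2.norm.integrable_sq
  have hinner_int : Integrable (fun ω => (inner ℝ (d ω) (g ω) : ℝ)) P := by
    have := L2.integrable_inner (𝕜 := ℝ) (hd2.toLp d) (hg2.toLp g)
    refine this.congr ?_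
    filter_upwards [hd2.coeFn_toLp, hg2.coeFn_toLp] with ω h1 h2
    simp [h1, h2]
  -- E⟨d,g⟩ ≤ -c₂ V
  have hEdg : (∫ ω, (inner ℝ (d ω) (g ω) : ℝ) ∂P) ≤ -c₂ * V := by
    rw [hV, ← integral_const_mul]
    refine integral_mono_ae hinner_int (hg_sq_int.const_mul _) ?_
    filter_upwards [hsgr] with ω hω using hω.2
  -- Jensen: h ≤ V
  have hJensen : h ≤ V := by
    have h1 : ‖G‖ ≤ ∫ ω, ‖g ω‖ ∂P := by
      rw [hG]; exact norm_integral_le_integral_norm g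
    have h2 : (∫ ω, ‖g ω‖ ∂P) ^ 2 ≤ V := by
      have hvar := ProbabilityTheory.variance_nonneg (fun ω => ‖g ω‖) P
      rw [ProbabilityTheory.variance_eq_sub hg2.norm] at hvar
      have : (∫ ω, ‖g ω‖ ∂P) ^ 2 ≤ ∫ ω, ((fun ω => ‖g ω‖) ^ 2) ω ∂P := by linarith
      refine this.trans_eq ?_
      rw [hV]; congr 1
    calc h = ‖G‖ ^ 2 := hh
      _ ≤ (∫ ω, ‖g ω‖ ∂P) ^ 2 := pow_le_pow_left₀ (norm_nonneg G) h1 2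
      _ ≤ V := h2
  -- h ≥ V / ρ
  have hVρ : V / ρ ≤ h := by
    rw [div_le_iff₀ hρ] at *
    linarith [hSGC]
  -- combine
  have key : (inner ℝ (∫ ω, d ω ∂P) G : ℝ) ≤ -c₂ * V + c₃ * (V - h) := by
    have := hCov
    nlinarith
  have hVh : V - h ≤ V * (1 - 1 / ρ) := by
    have : V / ρ ≤ h := hVρ
    have hρ' : V * (1 / ρ) = V / ρ := by ring
    nlinarith
  have hK : 0 < c₂ - c₃ * (1 - 1 / ρ) := by linarith
  calc (inner ℝ (∫ ω, d ω ∂P) G : ℝ) ≤ -c₂ * V + c₃ * (V - h) := key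
    _ ≤ -c₂ * V + c₃ * (V * (1 - 1 / ρ)) := by nlinarith
    _ = -(c₂ - c₃ * (1 - 1 / ρ)) * V := by ring
    _ ≤ -(c₂ - c₃ * (1 - 1 / ρ)) * h := by nlinarith
end

section
/- Let f : ℝⁿ → ℝ be differentiable with L-Lipschitz-continuous gradient (L > 0), attaining its global minimum f* = f(x*) at x*, and satisfying the Polyak–Łojasiewicz condition 2μ(f(y) − f*) ≤ ‖∇f(y)‖² for all y, with μ > 0. Fix x ∈ ℝⁿ. Let (Ω, 𝓕, P) be a probability space and F : Ω × ℝⁿ → ℝ be such that F(ω, ·) is differentiable for every ω; write g(ω) = ∇₂F(ω, x). Assume: (i) unbiasedness: E[F(·, x)] = f(x), E[F(·, x*)] = f(x*), and E[g] = ∇f(x); (ii) interpolation: F(ω, x*) ≤ F(ω, y) for all ω and all y; (iii) a random direction d : Ω → ℝⁿ satisfies ‖d(ω)‖ ≤ c₁‖g(ω)‖ and ⟨d(ω), g(ω)⟩ ≤ −c₂‖g(ω)‖² almost surely, with c₁, c₂ > 0; (iv) E[‖g‖²] ≤ ρ‖∇f(x)‖² with ρ > 0, and Cov(d, g) ≥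 −c₃ Var(g) with c₃ > 0 and σ := c₂ − c₃(1 − 1/ρ) > 0; (v) a random step size α : Ω → ℝ satisfies 0 < α_min ≤ α(ω) ≤ α_max and the Armijo condition F(ω, x + α(ω)·d(ω)) ≤ F(ω, x) + γ α(ω) ⟨d(ω), g(ω)⟩ for all ω, with γ ∈ (0,1); (vi) all the required integrability holds (in particular ω ↦ f(x + α(ω)d(ω)), g, d, ⟨d, g⟩, ‖g‖², F(·, x), F(·, x*) are integrable). Then E[f(x + α·d) − f*] ≤ α_max · (L c₁²/(2γc₂) − 2σμ + 1/α_min) · (f(x) − f*). -/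
open MeasureTheory

theorem grad_descent {m : ℕ} (f : EuclideanSpace ℝ (Fin m) → ℝ)
    (L : ℝ) (hf : Differentiable ℝ f)
    (hlip : ∀ y z, ‖gradient f y - gradient f z‖ ≤ L * ‖y - z‖)
    (z y : EuclideanSpace ℝ (Fin m)) :
    f y ≤ f z + (inner ℝ (gradient f z) (y - z) : ℝ) + L / 2 * ‖y - z‖ ^ 2 := by
  set v := y - z with hv
  have hcont : Continuous (gradient f) := by
    have : LipschitzWith (Real.toNNReal L) (gradient f) := by
      apply LipschitzWith.of_dist_le_mul
      intro a b
      rw [dist_eq_norm, dist_eq_norm]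
      refine le_trans (hlip a b) ?_
      have : L ≤ (Real.toNNReal L : ℝ) := Real.le_coe_toNNReal L
      exact mul_le_mul_of_nonneg_right this (norm_nonneg _)
    exact this.continuous
  have hline : Continuous fun t : ℝ => z + t • v :=
    continuous_const.add (continuous_id.smul continuous_const)
  have hder : ∀ t : ℝ, HasDerivAt (fun s : ℝ => f (z + s • v))
      ((inner ℝ (gradient f (z + t • v)) v : ℝ)) t := by
    intro t
    have h1 : HasDerivAt (fun s : ℝ => z + s • v) v t := by
      simpa using ((hasDerivAt_id t).smul_const v).const_add z
    have h2 := ((hf (z + t • v)).hasGradientAt).hasFDerivAt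
    have h3 := h2.comp_hasDerivAt t h1
    exact h3
  have hcont' : Continuous fun t : ℝ => (inner ℝ (gradient f (z + t • v)) v : ℝ) :=
    (hcont.comp hline).inner continuous_const
  have hftc : f (z + (1:ℝ) • v) - f (z + (0:ℝ) • v)
      = ∫ t in (0:ℝ)..1, (inner ℝ (gradient f (z + t • v)) v : ℝ) :=
    (intervalIntegral.integral_eq_sub_of_hasDerivAt (fun t _ => hder t)
      (hcont'.intervalIntegrable 0 1)).symm
  have hcont'' : Continuous fun t : ℝ =>
      (inner ℝ (gradient f z) v : ℝ) + L * t * ‖v‖ ^ 2 :=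
    continuous_const.add ((continuous_const.mul continuous_id).mul continuous_const)
  have hbound : (∫ t in (0:ℝ)..1, (inner ℝ (gradient f (z + t • v)) v : ℝ))
      ≤ ∫ t in (0:ℝ)..1, ((inner ℝ (gradient f z) v : ℝ) + L * t * ‖v‖ ^ 2) := by
    apply intervalIntegral.integral_mono_on (by norm_num)
      (hcont'.intervalIntegrable 0 1) (hcont''.intervalIntegrable 0 1)
    intro t ht
    have e1 : (inner ℝ (gradient f (z + t • v)) v : ℝ) - inner ℝ (gradient f z) v
        = inner ℝ (gradient f (z + t • v) - gradient f z) v := (inner_sub_left _ _ _).symm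
    have h3 : (inner ℝ (gradient f (z + t • v) - gradient f z) v : ℝ)
        ≤ ‖gradient f (z + t • v) - gradient f z‖ * ‖v‖ := real_inner_le_norm _ _
    have h4 : ‖gradient f (z + t • v) - gradient f z‖ ≤ L * ‖t • v‖ := by
      simpa using hlip (z + t • v) z
    have h5 : ‖t • v‖ = t * ‖v‖ := by
      rw [norm_smul, Real.norm_eq_abs, abs_of_nonneg ht.1]
    have h6 : ‖gradient f (z + t • v) - gradient f z‖ * ‖v‖ ≤ (L * (t * ‖v‖)) * ‖v‖ := by
      rw [← h5]; exact mul_le_mul_of_nonneg_right h4 (norm_nonneg _)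
    nlinarith [h3, h6]
  have hval : (∫ t in (0:ℝ)..1, ((inner ℝ (gradient f z) v : ℝ) + L * t * ‖v‖ ^ 2))
      = (inner ℝ (gradient f z) v : ℝ) + L / 2 * ‖v‖ ^ 2 := by
    rw [intervalIntegral.integral_add (intervalIntegrable_const)
      (((by fun_prop : Continuous fun t : ℝ => L * t * ‖v‖ ^ 2)).intervalIntegrable 0 1)]
    have : (∫ t in (0:ℝ)..1, L * t * ‖v‖ ^ 2) = L / 2 * ‖v‖ ^ 2 := by
      have e : (fun t : ℝ => L * t * ‖v‖ ^ 2) = fun t : ℝ => (L * ‖v‖ ^ 2) * t := by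
        funext t; ring
      rw [e, intervalIntegral.integral_const_mul, integral_id]
      ring
    rw [this]
    simp
  have hy : z + (1:ℝ) • v = y := by simp [hv]
  have hz : z + (0:ℝ) • v = z := by simp
  rw [hy, hz] at hftc
  linarith [hftc, hbound.trans_eq hval]

set_option maxHeartbeats 2000000 in

/-- One-step linear decrease in expectation for stochastic-line-search methods
with SGR directions under the PL condition and interpolation (main theorem, one iteration). -/
theorem expected_one_step_decrease
    (n : ℕ) (f : EuclideanSpace ℝ (Fin n) → ℝ) (L : ℝ) (hL : 0 < L)
    (hfdiff : Differentiable ℝ f)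
    (hflip : ∀ y z : EuclideanSpace ℝ (Fin n), ‖gradient f y - gradient f z‖ ≤ L * ‖y - z‖)
    (xstar : EuclideanSpace ℝ (Fin n)) (hmin : ∀ y, f xstar ≤ f y)
    (μ : ℝ) (hμ : 0 < μ)
    (hPL : ∀ y, 2 * μ * (f y - f xstar) ≤ ‖gradient f y‖ ^ 2)
    (x : EuclideanSpace ℝ (Fin n))
    {Ω : Type*} [MeasurableSpace Ω] (P : Measure Ω) [IsProbabilityMeasure P]
    (F : Ω → EuclideanSpace ℝ (Fin n) → ℝ)
    (hFdiff : ∀ ω, Differentiable ℝ (F ω))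
    (g : Ω → EuclideanSpace ℝ (Fin n)) (hg : ∀ ω, g ω = gradient (F ω) x)
    -- (i) unbiasedness
    (hunb₁ : (∫ ω, F ω x ∂P) = f x)
    (hunb₂ : (∫ ω, F ω xstar ∂P) = f xstar)
    (hunb₃ : (∫ ω, g ω ∂P) = gradient f x)
    -- (ii) interpolation
    (hinterp : ∀ ω, ∀ y, F ω xstar ≤ F ω y)
    -- (iii) SGR direction
    (d : Ω → EuclideanSpace ℝ (Fin n)) (c₁ c₂ : ℝ) (hc₁ : 0 < c₁) (hc₂ : 0 < c₂)
    (hsgr : ∀ᵐ ω ∂P, ‖d ω‖ ≤ c₁ * ‖g ω‖ ∧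
      (inner ℝ (d ω) (g ω) : ℝ) ≤ -c₂ * ‖g ω‖ ^ 2)
    -- (iv) strong growth at x and covariance bound
    (ρ : ℝ) (hρ : 0 < ρ)
    (hSGC : ∫ ω, ‖g ω‖ ^ 2 ∂P ≤ ρ * ‖gradient f x‖ ^ 2)
    (c₃ : ℝ) (hc₃ : 0 < c₃)
    (hCov : (∫ ω, (inner ℝ (d ω) (g ω) : ℝ) ∂P) -
        (inner ℝ (∫ ω, d ω ∂P) (∫ ω, g ω ∂P) : ℝ) ≥
      -c₃ * ((∫ ω, ‖g ω‖ ^ 2 ∂P) - ‖∫ ω, g ω ∂P‖ ^ 2))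
    (σ : ℝ) (hσdef : σ = c₂ - c₃ * (1 - 1 / ρ)) (hσpos : 0 < σ)
    -- (v) step sizes satisfying the Armijo condition
    (α : Ω → ℝ) (αmin αmax : ℝ) (hαmin : 0 < αmin)
    (hα : ∀ ω, αmin ≤ α ω ∧ α ω ≤ αmax)
    (γ : ℝ) (hγ : γ ∈ Set.Ioo (0 : ℝ) 1)
    (harmijo : ∀ ω, F ω (x + α ω • d ω) ≤ F ω x + γ * α ω * (inner ℝ (d ω) (g ω) : ℝ))
    -- (vi) integrability
    (hint₁ : Integrable (fun ω => f (x + α ω • d ω)) P)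
    (hint₂ : Integrable g P)
    (hint₃ : Integrable d P)
    (hint₄ : Integrable (fun ω => (inner ℝ (d ω) (g ω) : ℝ)) P)
    (hint₅ : Integrable (fun ω => ‖g ω‖ ^ 2) P)
    (hint₆ : Integrable (fun ω => F ω x) P)
    (hint₇ : Integrable (fun ω => F ω xstar) P) :
    (∫ ω, (f (x + α ω • d ω) - f xstar) ∂P) ≤
      αmax * (L * c₁ ^ 2 / (2 * γ * c₂) - 2 * σ * μ + 1 / αmin) * (f x - f xstar) := by
  obtain ⟨hγ0, hγ1⟩ := hγ
  have hΩ : Nonempty Ω := by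
    by_contra h
    rw [not_nonempty_iff] at h
    have h1 : P Set.univ = 1 := measure_univ
    rw [Set.univ_eq_empty_iff.mpr h] at h1
    simp at h1
  obtain ⟨ω₀⟩ := hΩ
  have hαle : αmin ≤ αmax := (hα ω₀).1.trans (hα ω₀).2
  have hαmax : 0 < αmax := hαmin.trans_le hαle
  have hΔ : 0 ≤ f x - f xstar := sub_nonneg.mpr (hmin x)
  -- ‖∇f x‖² ≤ 2L (f x - f*)
  have hN2L : ‖gradient f x‖ ^ 2 ≤ 2 * L * (f x - f xstar) := by
    have hd := grad_descent f L hfdiff hflip x (x - (1/L) • gradient f x)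
    have e1 : (x - (1/L) • gradient f x) - x = -((1/L) • gradient f x) := by abel
    rw [e1] at hd
    have e2 : (inner ℝ (gradient f x) (-((1/L) • gradient f x)) : ℝ)
        = -((1/L) * ‖gradient f x‖^2) := by
      rw [inner_neg_right, real_inner_smul_right, real_inner_self_eq_norm_sq]
    have e3 : ‖-((1/L) • gradient f x)‖^2 = (1/L)^2 * ‖gradient f x‖^2 := by
      rw [norm_neg, norm_smul, Real.norm_eq_abs, abs_of_pos (by positivity : (0:ℝ) < 1/L)]
      ring
    rw [e2, e3] at hd
    have h4 := hmin (x - (1/L) • gradient f x)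
    have key : 1/(2*L) * ‖gradient f x‖^2 ≤ f x - f xstar := by
      have e4 : f x + -(1/L * ‖gradient f x‖^2) + L/2 * ((1/L)^2 * ‖gradient f x‖^2)
          = f x - 1/(2*L) * ‖gradient f x‖^2 := by
        field_simp
        ring
      rw [e4] at hd
      linarith
    have h2L : (0:ℝ) < 2*L := by linarith
    calc ‖gradient f x‖^2 = (2*L) * (1/(2*L) * ‖gradient f x‖^2) := by
          field_simp
      _ ≤ (2*L) * (f x - f xstar) := mul_le_mul_of_nonneg_left key h2L.le
      _ = 2 * L * (f x - f xstar) := by ring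
  set M : ℝ := L * c₁^2 * αmax / (2 * γ * c₂) with hM
  set C0 : ℝ := (f x - f xstar) + (αmax - αmin) * ‖gradient f x‖^2 / (2*L*αmin) with hC0
  -- pointwise key inequality
  have hkey : ∀ᵐ ω ∂P, f (x + α ω • d ω) - f xstar ≤
      C0 + αmax * (inner ℝ (gradient f x) (d ω) : ℝ) + M * (F ω x - F ω xstar) := by
    filter_upwards [hsgr] with ω hω
    obtain ⟨h1, h2⟩ := hω
    have ha1 : αmin ≤ α ω := (hα ω).1
    have ha2 : α ω ≤ αmax := (hα ω).2
    have ha0 : 0 < α ω := hαmin.trans_le ha1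
    have hd := grad_descent f L hfdiff hflip x (x + α ω • d ω)
    have e1 : (x + α ω • d ω) - x = α ω • d ω := add_sub_cancel_left x _
    rw [e1] at hd
    have e2 : (inner ℝ (gradient f x) (α ω • d ω) : ℝ)
        = α ω * inner ℝ (gradient f x) (d ω) := real_inner_smul_right _ _ _
    have e3 : ‖α ω • d ω‖^2 = (α ω)^2 * ‖d ω‖^2 := by
      rw [norm_smul, Real.norm_eq_abs, abs_of_pos ha0, mul_pow]
    rw [e2, e3] at hd
    have hDg : ‖d ω‖^2 ≤ c₁^2 * ‖g ω‖^2 := by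
      nlinarith [norm_nonneg (d ω), norm_nonneg (g ω), h1]
    have hGD : -(inner ℝ (gradient f x) (d ω) : ℝ) ≤ ‖gradient f x‖ * ‖d ω‖ := by
      have ha := abs_real_inner_le_norm (gradient f x) (d ω)
      have hb := neg_abs_le (inner ℝ (gradient f x) (d ω) : ℝ)
      linarith
    have h2Lα : (0:ℝ) < 2*L*αmin := by positivity
    have hyoung : ‖gradient f x‖ * ‖d ω‖
        ≤ ‖gradient f x‖^2 / (2*L*αmin) + (L*αmin/2) * ‖d ω‖^2 := by
      have base : 2*L*αmin*(‖gradient f x‖*‖d ω‖)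
          ≤ ‖gradient f x‖^2 + (L*αmin)^2*‖d ω‖^2 := by
        nlinarith [sq_nonneg (‖gradient f x‖ - L*αmin*‖d ω‖)]
      have he1 : ‖gradient f x‖*‖d ω‖ = (2*L*αmin*(‖gradient f x‖*‖d ω‖))/(2*L*αmin) := by
        field_simp
      have he2 : ‖gradient f x‖^2/(2*L*αmin) + L*αmin/2*‖d ω‖^2
          = (‖gradient f x‖^2 + (L*αmin)^2*‖d ω‖^2)/(2*L*αmin) := by
        field_simp
      rw [he1, he2]
      exact (div_le_div_iff_of_pos_right h2Lα).mpr base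
    have harm : α ω * ‖g ω‖^2 ≤ (F ω x - F ω xstar) / (γ * c₂) := by
      have h3 := harmijo ω
      have h4 := hinterp ω (x + α ω • d ω)
      have h5 : c₂ * ‖g ω‖^2 ≤ -(inner ℝ (d ω) (g ω) : ℝ) := by linarith
      have hga : (0:ℝ) < γ * α ω := mul_pos hγ0 ha0
      rw [le_div_iff₀ (by positivity : (0:ℝ) < γ * c₂)]
      have h6 : γ * α ω * (c₂ * ‖g ω‖^2) ≤ γ * α ω * (-(inner ℝ (d ω) (g ω) : ℝ)) :=
        mul_le_mul_of_nonneg_left h5 hga.le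
      linarith [h3, h4, h6]
    have hw1 : (αmax - α ω) * (-(inner ℝ (gradient f x) (d ω) : ℝ))
        ≤ (αmax - α ω) * (‖gradient f x‖ * ‖d ω‖) :=
      mul_le_mul_of_nonneg_left hGD (by linarith)
    have hw2 : (αmax - α ω) * (‖gradient f x‖ * ‖d ω‖)
        ≤ (αmax - α ω) * (‖gradient f x‖^2 / (2*L*αmin) + (L*αmin/2) * ‖d ω‖^2) :=
      mul_le_mul_of_nonneg_left hyoung (by linarith)
    have hw3 : (αmax - α ω) * (‖gradient f x‖^2 / (2*L*αmin))
        ≤ (αmax - αmin) * (‖gradient f x‖^2 / (2*L*αmin)) :=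
      mul_le_mul_of_nonneg_right (by linarith) (by positivity)
    have hq1 : L/2*(α ω)^2*‖d ω‖^2 + (αmax - α ω)*((L*αmin/2)*‖d ω‖^2)
        ≤ L/2*(αmax*α ω)*‖d ω‖^2 := by
      have ht : (0:ℝ) ≤ L * ((α ω - αmin) * (αmax - α ω)) * ‖d ω‖^2 :=
        mul_nonneg (mul_nonneg hL.le
          (mul_nonneg (by linarith) (by linarith))) (sq_nonneg _)
      linarith [ht]
    have hq2 : L/2*(αmax*α ω)*‖d ω‖^2 ≤ L/2*αmax*c₁^2*(α ω*‖g ω‖^2) := by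
      have := mul_le_mul_of_nonneg_left hDg
        (show (0:ℝ) ≤ L/2*αmax*(α ω) by positivity)
      linarith [this]
    have hq3 : L/2*αmax*c₁^2*(α ω*‖g ω‖^2) ≤ M * (F ω x - F ω xstar) := by
      have hh := mul_le_mul_of_nonneg_left harm
        (show (0:ℝ) ≤ L/2*αmax*c₁^2 by positivity)
      have ee : L/2*αmax*c₁^2 * ((F ω x - F ω xstar)/(γ*c₂)) = M * (F ω x - F ω xstar) := by
        rw [hM]; field_simp
      linarith [hh, ee]
    have hC0e : C0 = (f x - f xstar) + (αmax - αmin) * ‖gradient f x‖^2 / (2*L*αmin) := hC0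
    have ediv : (αmax - αmin) * ‖gradient f x‖^2 / (2*L*αmin)
        = (αmax - αmin) * (‖gradient f x‖^2 / (2*L*αmin)) := by ring
    rw [hC0e, ediv]
    linarith [hd, hw1, hw2, hw3, hq1, hq2, hq3]
  -- integrate
  have hIleft : Integrable (fun ω => f (x + α ω • d ω) - f xstar) P :=
    hint₁.sub (integrable_const _)
  have hIinner : Integrable (fun ω => (inner ℝ (gradient f x) (d ω) : ℝ)) P :=
    hint₃.const_inner _
  have hI67 : Integrable (fun ω => F ω x - F ω xstar) P := hint₆.sub hint₇
  have hIc : Integrable (fun _ : Ω => C0) P := integrable_const C0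
  have hIin2 : Integrable (fun ω => αmax * (inner ℝ (gradient f x) (d ω) : ℝ)) P :=
    hIinner.const_mul αmax
  have hIA : Integrable (fun ω => C0 + αmax * (inner ℝ (gradient f x) (d ω) : ℝ)) P :=
    hIc.add hIin2
  have hIB : Integrable (fun ω => M * (F ω x - F ω xstar)) P := hI67.const_mul M
  have hIright : Integrable (fun ω =>
      C0 + αmax * (inner ℝ (gradient f x) (d ω) : ℝ) + M * (F ω x - F ω xstar)) P :=
    hIA.add hIB
  have hmono := integral_mono_ae hIleft hIright hkey
  have hre : (∫ ω, (C0 + αmax * (inner ℝ (gradient f x) (d ω) : ℝ)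
        + M * (F ω x - F ω xstar)) ∂P)
      = C0 + αmax * (inner ℝ (gradient f x) (∫ ω, d ω ∂P) : ℝ) + M * (f x - f xstar) := by
    rw [integral_add hIA hIB, integral_add hIc hIin2,
      integral_const, integral_const_mul, integral_const_mul,
      integral_sub hint₆ hint₇, hunb₁, hunb₂, integral_inner hint₃]
    simp [measure_univ]
  rw [hre] at hmono
  -- expectation facts
  have hE1 : (∫ ω, (inner ℝ (d ω) (g ω) : ℝ) ∂P) ≤ -c₂ * ∫ ω, ‖g ω‖^2 ∂P := by
    have := integral_mono_ae hint₄ (hint₅.const_mul (-c₂)) (hsgr.mono fun ω h => h.2)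
    rwa [integral_const_mul] at this
  have hE5 : ‖gradient f x‖^2 ≤ ∫ ω, ‖g ω‖^2 ∂P := by
    have hng : Integrable (fun ω => ‖g ω‖) P := hint₂.norm
    set mm := ∫ ω, ‖g ω‖ ∂P with hmm
    have hvar : 0 ≤ ∫ ω, (‖g ω‖ - mm)^2 ∂P := integral_nonneg fun ω => sq_nonneg _
    have hexp : (∫ ω, (‖g ω‖ - mm)^2 ∂P) = (∫ ω, ‖g ω‖^2 ∂P) - mm^2 := by
      have e : (fun ω => (‖g ω‖ - mm)^2) = fun ω => (‖g ω‖^2 - (2*mm)*‖g ω‖) + mm^2 := by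
        funext ω; ring
      have hI2m : Integrable (fun ω => 2*mm*‖g ω‖) P := hng.const_mul (2*mm)
      have hIsub : Integrable (fun ω => ‖g ω‖^2 - 2*mm*‖g ω‖) P := hint₅.sub hI2m
      rw [e, integral_add hIsub (integrable_const (mm^2)),
        integral_sub hint₅ hI2m, integral_const_mul, integral_const]
      simp [measure_univ, ← hmm]
      ring
    have h1 : ‖∫ ω, g ω ∂P‖ ≤ mm := norm_integral_le_integral_norm _
    have h2 : ‖gradient f x‖ ≤ mm := by rw [← hunb₃]; exact h1
    have h3 : ‖gradient f x‖^2 ≤ mm^2 := by nlinarith [norm_nonneg (gradient f x)]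
    linarith [hvar, hexp ▸ hvar]
  have hE3 : (∫ ω, ‖g ω‖^2 ∂P) / ρ ≤ ‖gradient f x‖^2 := by
    rw [div_le_iff₀ hρ]
    linarith [hSGC]
  have hEd : (inner ℝ (gradient f x) (∫ ω, d ω ∂P) : ℝ) ≤ -σ * ∫ ω, ‖g ω‖^2 ∂P := by
    have hcomm : (inner ℝ (gradient f x) (∫ ω, d ω ∂P) : ℝ)
        = (inner ℝ (∫ ω, d ω ∂P) (∫ ω, g ω ∂P) : ℝ) := by
      rw [hunb₃, real_inner_comm]
    have h2 : ‖∫ ω, g ω ∂P‖^2 = ‖gradient f x‖^2 := by rw [hunb₃]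
    have h1 : (inner ℝ (∫ ω, d ω ∂P) (∫ ω, g ω ∂P) : ℝ)
        ≤ (∫ ω, (inner ℝ (d ω) (g ω) : ℝ) ∂P)
          + c₃ * ((∫ ω, ‖g ω‖^2 ∂P) - ‖gradient f x‖^2) := by
      rw [← h2]; linarith [hCov]
    have h4 : c₃ * ((∫ ω, ‖g ω‖^2 ∂P)/ρ) ≤ c₃ * ‖gradient f x‖^2 :=
      mul_le_mul_of_nonneg_left hE3 hc₃.le
    have hσ' : -σ * (∫ ω, ‖g ω‖^2 ∂P) = -c₂*(∫ ω, ‖g ω‖^2 ∂P)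
        + c₃*(∫ ω, ‖g ω‖^2 ∂P) - c₃*((∫ ω, ‖g ω‖^2 ∂P)/ρ) := by
      rw [hσdef]; field_simp; ring
    rw [hcomm]
    linarith [h1, hE1, h4, hσ']
  -- final combination
  have hfin1 : αmax * (inner ℝ (gradient f x) (∫ ω, d ω ∂P) : ℝ)
      ≤ αmax * (-σ * ∫ ω, ‖g ω‖^2 ∂P) := mul_le_mul_of_nonneg_left hEd hαmax.le
  have hPLx : 2*μ*(f x - f xstar) ≤ ∫ ω, ‖g ω‖^2 ∂P := le_trans (hPL x) hE5
  have hfin2 : -σ * (∫ ω, ‖g ω‖^2 ∂P) ≤ -σ * (2*μ*(f x - f xstar)) := by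
    nlinarith [hPLx, hσpos]
  have hfin2' : αmax * (-σ * ∫ ω, ‖g ω‖^2 ∂P) ≤ αmax * (-σ * (2*μ*(f x - f xstar))) :=
    mul_le_mul_of_nonneg_left hfin2 hαmax.le
  have hfin3 : C0 ≤ (αmax/αmin) * (f x - f xstar) := by
    have h1 : (αmax - αmin) * ‖gradient f x‖^2 / (2*L*αmin)
        ≤ (αmax - αmin) * (2*L*(f x - f xstar)) / (2*L*αmin) := by
      gcongr
    have h2 : (αmax - αmin) * (2*L*(f x - f xstar)) / (2*L*αmin)
        = (αmax - αmin)/αmin * (f x - f xstar) := by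
      field_simp
    have h3 : (f x - f xstar) + (αmax - αmin)/αmin * (f x - f xstar)
        = (αmax/αmin)*(f x - f xstar) := by
      field_simp
      ring
    rw [hC0]
    linarith
  have hgoal : αmax * (L * c₁ ^ 2 / (2 * γ * c₂) - 2 * σ * μ + 1 / αmin) * (f x - f xstar)
      = (αmax/αmin) * (f x - f xstar) + M * (f x - f xstar)
        + αmax * (-σ * (2*μ*(f x - f xstar))) := by
    rw [hM]; field_simp; ring
  calc (∫ ω, (f (x + α ω • d ω) - f xstar) ∂P)
      ≤ C0 + αmax * (inner ℝ (gradient f x) (∫ ω, d ω ∂P) : ℝ) + M * (f x - f xstar) := hmono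
    _ ≤ (αmax/αmin) * (f x - f xstar) + M * (f x - f xstar)
        + αmax * (-σ * (2*μ*(f x - f xstar))) := by linarith [hfin1, hfin2', hfin3]
    _ = αmax * (L * c₁ ^ 2 / (2 * γ * c₂) - 2 * σ * μ + 1 / αmin) * (f x - f xstar) :=
        hgoal.symm
end

section
/- Let (Ω, 𝓕, P) be a probability space, let H : Ω → Mat_{n×n}(ℝ) be an integrable random matrix and g : Ω → ℝⁿ an integrable random vector with E[g] = G. Suppose that almost surely H(ω) is symmetric with all eigenvalues in [c₂, c₁], where 0 < c₂ ≤ c₁, and suppose H and g are uncorrelated in the sense that E[H g] = E[H] G. Then the random direction d = −H g satisfies ‖E[d]‖ ≤ c₁‖G‖ and ⟨E[d], G⟩ ≤ −c₂‖G‖². -/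
open MeasureTheory

/-- Expansion of the Euclidean inner product against a matrix action. -/
lemma inner_toEuclideanLin_expand (n : ℕ) (M : Matrix (Fin n) (Fin n) ℝ)
    (v w : EuclideanSpace ℝ (Fin n)) :
    (inner ℝ v (Matrix.toEuclideanLin M w) : ℝ) = ∑ i, ∑ j, v i * M i j * w j := by
  simp [Matrix.toEuclideanLin_apply, Matrix.mulVec, dotProduct, PiLp.inner_apply,
    Finset.mul_sum, mul_assoc, Finset.sum_mul, mul_comm, mul_left_comm]

/-- A random preconditioner with bounded eigenvalues, uncorrelated with the
stochastic gradient, gives a direction satisfying the Bottou-like expected conditions. -/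
theorem uncorrelated_preconditioner_expected_sgr
    {Ω : Type*} [MeasurableSpace Ω] (P : Measure Ω) [IsProbabilityMeasure P]
    (n : ℕ) (H : Ω → Matrix (Fin n) (Fin n) ℝ) (g : Ω → EuclideanSpace ℝ (Fin n))
    (hHint : ∀ i j, Integrable (fun ω => H ω i j) P)
    (hgint : Integrable g P)
    (hdint : Integrable (fun ω => Matrix.toEuclideanLin (H ω) (g ω)) P)
    (G : EuclideanSpace ℝ (Fin n)) (hG : G = ∫ ω, g ω ∂P)
    (EH : Matrix (Fin n) (Fin n) ℝ) (hEH : ∀ i j, EH i j = ∫ ω, H ω i j ∂P)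
    (c₁ c₂ : ℝ) (hc₂ : 0 < c₂) (hc : c₂ ≤ c₁)
    (hbdd : ∀ᵐ ω ∂P, (H ω).IsSymm ∧
      ∀ v : EuclideanSpace ℝ (Fin n),
        c₂ * ‖v‖ ^ 2 ≤ (inner ℝ v (Matrix.toEuclideanLin (H ω) v) : ℝ) ∧
        (inner ℝ v (Matrix.toEuclideanLin (H ω) v) : ℝ) ≤ c₁ * ‖v‖ ^ 2)
    (huncorr : (∫ ω, Matrix.toEuclideanLin (H ω) (g ω) ∂P) = Matrix.toEuclideanLin EH G) :
    ‖∫ ω, -(Matrix.toEuclideanLin (H ω) (g ω)) ∂P‖ ≤ c₁ * ‖G‖ ∧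
      (inner ℝ (∫ ω, -(Matrix.toEuclideanLin (H ω) (g ω)) ∂P) G : ℝ) ≤ -c₂ * ‖G‖ ^ 2 := by
  set A : EuclideanSpace ℝ (Fin n) →ₗ[ℝ] EuclideanSpace ℝ (Fin n) :=
    Matrix.toEuclideanLin EH with hA
  -- the integral of the negated direction
  have hneg : (∫ ω, -(Matrix.toEuclideanLin (H ω) (g ω)) ∂P) = -(A G) := by
    rw [integral_neg, huncorr]
  -- EH is symmetric
  have hEHsymm : ∀ i j, EH i j = EH j i := by
    intro i j
    rw [hEH i j, hEH j i]
    refine integral_congr_ae ?_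
    filter_upwards [hbdd] with ω hω
    exact hω.1.apply j i
  -- quadratic form of EH is integral of quadratic forms
  have hquad : ∀ v : EuclideanSpace ℝ (Fin n),
      (inner ℝ v (A v) : ℝ) = ∫ ω, (inner ℝ v (Matrix.toEuclideanLin (H ω) v) : ℝ) ∂P := by
    intro v
    rw [hA, inner_toEuclideanLin_expand]
    have : (∫ ω, (inner ℝ v (Matrix.toEuclideanLin (H ω) v) : ℝ) ∂P)
        = ∫ ω, ∑ i, ∑ j, v i * H ω i j * v j ∂P := by
      refine integral_congr_ae (Filter.Eventually.of_forall fun ω => ?_)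
      exact inner_toEuclideanLin_expand n (H ω) v v
    rw [this]
    rw [integral_finset_sum _ (fun i _ => integrable_finset_sum _
      (fun j _ => ((hHint i j).const_mul (v i)).mul_const (v j)))]
    refine Finset.sum_congr rfl fun i _ => ?_
    rw [integral_finset_sum _ (fun j _ => ((hHint i j).const_mul (v i)).mul_const (v j))]
    refine Finset.sum_congr rfl fun j _ => ?_
    rw [hEH]
    rw [integral_mul_const, integral_const_mul]
  -- integrability of the quadratic form
  have hqint : ∀ v : EuclideanSpace ℝ (Fin n),
      Integrable (fun ω => (inner ℝ v (Matrix.toEuclideanLin (H ω) v) : ℝ)) P := by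
    intro v
    have : (fun ω => (inner ℝ v (Matrix.toEuclideanLin (H ω) v) : ℝ))
        = fun ω => ∑ i, ∑ j, v i * H ω i j * v j := by
      funext ω; exact inner_toEuclideanLin_expand n (H ω) v v
    rw [this]
    exact integrable_finset_sum _ (fun i _ => integrable_finset_sum _
      (fun j _ => ((hHint i j).const_mul (v i)).mul_const (v j)))
  -- the quadratic bounds for A
  have hlow : ∀ v : EuclideanSpace ℝ (Fin n), c₂ * ‖v‖ ^ 2 ≤ (inner ℝ v (A v) : ℝ) := by
    intro v
    rw [hquad]
    have h1 : c₂ * ‖v‖ ^ 2 = ∫ _ω, c₂ * ‖v‖ ^ 2 ∂P := by simp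
    rw [h1]
    refine integral_mono_ae (integrable_const _) (hqint v) ?_
    filter_upwards [hbdd] with ω hω
    exact (hω.2 v).1
  have hhigh : ∀ v : EuclideanSpace ℝ (Fin n), (inner ℝ v (A v) : ℝ) ≤ c₁ * ‖v‖ ^ 2 := by
    intro v
    rw [hquad]
    have h1 : c₁ * ‖v‖ ^ 2 = ∫ _ω, c₁ * ‖v‖ ^ 2 ∂P := by simp
    rw [h1]
    refine integral_mono_ae (hqint v) (integrable_const _) ?_
    filter_upwards [hbdd] with ω hω
    exact (hω.2 v).2
  -- symmetry of the bilinear form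
  have hbsymm : ∀ x y : EuclideanSpace ℝ (Fin n),
      (inner ℝ x (A y) : ℝ) = (inner ℝ y (A x) : ℝ) := by
    intro x y
    rw [hA, inner_toEuclideanLin_expand, inner_toEuclideanLin_expand, Finset.sum_comm]
    refine Finset.sum_congr rfl fun j _ => Finset.sum_congr rfl fun i _ => ?_
    rw [hEHsymm i j]; ring
  -- nonnegativity of the quadratic form
  have hnn : ∀ v : EuclideanSpace ℝ (Fin n), 0 ≤ (inner ℝ v (A v) : ℝ) := fun v =>
    le_trans (by positivity) (hlow v)
  -- Cauchy–Schwarz for the bilinear form of A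
  have hcs : ∀ x y : EuclideanSpace ℝ (Fin n),
      (inner ℝ x (A y) : ℝ) ^ 2 ≤ (inner ℝ x (A x) : ℝ) * (inner ℝ y (A y) : ℝ) := by
    intro x y
    have hq : ∀ t : ℝ, 0 ≤ (inner ℝ y (A y) : ℝ) * (t * t)
        + (2 * (inner ℝ x (A y) : ℝ)) * t + (inner ℝ x (A x) : ℝ) := by
      intro t
      have := hnn (x + t • y)
      have hexp : (inner ℝ (x + t • y) (A (x + t • y)) : ℝ)
          = (inner ℝ y (A y) : ℝ) * (t * t)
            + (2 * (inner ℝ x (A y) : ℝ)) * t + (inner ℝ x (A x) : ℝ) := by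
        simp only [map_add, LinearMap.map_smul, inner_add_left, inner_add_right,
          real_inner_smul_left, real_inner_smul_right]
        rw [show (inner ℝ y (A x) : ℝ) = (inner ℝ x (A y) : ℝ) from (hbsymm x y).symm]
        ring
      rw [hexp] at this
      exact this
    have hd := discrim_le_zero hq
    rw [discrim] at hd
    nlinarith [hd]
  -- operator norm bound on A G
  have hAG : ‖A G‖ ≤ c₁ * ‖G‖ := by
    rcases eq_or_ne (A G) 0 with h0 | h0
    · rw [h0, norm_zero]
      have hc₁ : (0:ℝ) < c₁ := hc₂.trans_le hc
      positivity
    · have h1 : ‖A G‖ ^ 2 = (inner ℝ (A G) (A G) : ℝ) := (real_inner_self_eq_norm_sq _).symm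
      have h2 := hcs (A G) G
      -- (‖A G‖²)² = ⟨A G, A (G)⟩ ... 
      have h6 : (‖A G‖ ^ 2) ^ 2 ≤ (c₁ * ‖A G‖ ^ 2) * (c₁ * ‖G‖ ^ 2) := by
        calc (‖A G‖ ^ 2) ^ 2 = (inner ℝ (A G) (A G) : ℝ) ^ 2 := by rw [h1]
          _ ≤ (inner ℝ (A G) (A (A G)) : ℝ) * (inner ℝ G (A G) : ℝ) := hcs (A G) G
          _ ≤ (c₁ * ‖A G‖ ^ 2) * (c₁ * ‖G‖ ^ 2) := by
              have hg0 : (0:ℝ) ≤ inner ℝ G (A G) := hnn G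
              have hc₁ : (0:ℝ) < c₁ := hc₂.trans_le hc
              exact mul_le_mul (hhigh (A G)) (hhigh G) hg0
                (mul_nonneg hc₁.le (sq_nonneg _))
      have hpos : 0 < ‖A G‖ := norm_pos_iff.mpr h0
      have hc₁ : (0:ℝ) < c₁ := hc₂.trans_le hc
      have h7 : ‖A G‖ ^ 2 ≤ (c₁ * ‖G‖) ^ 2 := by nlinarith [h6, mul_pos hpos hpos]
      nlinarith [h7, hpos, norm_nonneg G, mul_nonneg hc₁.le (norm_nonneg G)]
  constructor
  · rw [hneg, norm_neg]; exact hAG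
  · rw [hneg]
    have : (inner ℝ (-(A G)) G : ℝ) = -(inner ℝ G (A G) : ℝ) := by
      rw [inner_neg_left, real_inner_comm]
    rw [this]
    have := hlow G
    linarith
end

section
/- Let f₁, …, f_N : ℝⁿ → ℝ be differentiable, f = (1/N) Σᵢ fᵢ, and suppose f is L-smooth (L > 0) and attains its minimum f* over ℝⁿ. If f satisfies the strong growth condition with constant ρ > 0, i.e., (1/N) Σᵢ ‖∇fᵢ(x)‖² ≤ ρ‖∇f(x)‖² for all x, then f satisfies the weak growth condition with the same constant: (1/N) Σᵢ ‖∇fᵢ(x)‖² ≤ 2ρL(f(x) − f*) for all x. -/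
open scoped RealInnerProductSpace

lemma descent_lemma {n : ℕ} (f : EuclideanSpace ℝ (Fin n) → ℝ)
    (hf : Differentiable ℝ f) (L : ℝ) (hL : 0 < L)
    (hlip : ∀ y z : EuclideanSpace ℝ (Fin n), ‖gradient f y - gradient f z‖ ≤ L * ‖y - z‖)
    (x y : EuclideanSpace ℝ (Fin n)) :
    f y ≤ f x + ⟪gradient f x, y - x⟫ + L / 2 * ‖y - x‖ ^ 2 := by
  set v := y - x with hv
  set g0 := gradient f x with hg0
  set h : ℝ → ℝ := fun t => f (x + t • v) - f x - t * ⟪g0, v⟫ - L / 2 * t ^ 2 * ‖v‖ ^ 2 with hh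
  have key : ∀ t : ℝ, HasDerivAt h
      (⟪gradient f (x + t • v), v⟫ - ⟪g0, v⟫ - L * t * ‖v‖ ^ 2) t := by
    intro t
    have line : HasDerivAt (fun t : ℝ => x + t • v) v t := by
      simpa using ((hasDerivAt_id t).smul_const v).const_add x
    have hfd : HasDerivAt (fun t : ℝ => f (x + t • v)) (⟪gradient f (x + t • v), v⟫) t := by
      have := ((hf (x + t • v)).hasFDerivAt).comp_hasDerivAt t line
      exact this.congr_deriv (by rw [gradient, InnerProductSpace.toDual_symm_apply])
    have h1 : HasDerivAt (fun t : ℝ => t * ⟪g0, v⟫) (⟪g0, v⟫) t := by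
      simpa using (hasDerivAt_id t).mul_const (⟪g0, v⟫)
    have h2 : HasDerivAt (fun t : ℝ => L / 2 * t ^ 2 * ‖v‖ ^ 2) (L * t * ‖v‖ ^ 2) t := by
      have := ((hasDerivAt_pow 2 t).const_mul (L / 2)).mul_const (‖v‖ ^ 2)
      refine this.congr_deriv ?_
      ring
    exact ((hfd.sub_const (f x)).sub h1).sub h2
  have hanti : AntitoneOn h (Set.Icc 0 1) := by
    apply antitoneOn_of_deriv_nonpos (convex_Icc 0 1)
    · exact fun t _ => ((key t).continuousAt).continuousWithinAt
    · intro t ht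
      exact ((key t).differentiableAt).differentiableWithinAt
    · intro t ht
      rw [interior_Icc] at ht
      rw [(key t).deriv]
      have cs : ⟪gradient f (x + t • v) - g0, v⟫ ≤ ‖gradient f (x + t • v) - g0‖ * ‖v‖ :=
        real_inner_le_norm _ _
      have hl : ‖gradient f (x + t • v) - g0‖ ≤ L * (t * ‖v‖) := by
        have := hlip (x + t • v) x
        simpa [norm_smul, abs_of_pos ht.1, mul_assoc] using this
      have hv0 : (0 : ℝ) ≤ ‖v‖ := norm_nonneg _
      have h3 := cs.trans (mul_le_mul_of_nonneg_right hl hv0)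
      rw [inner_sub_left] at h3
      nlinarith [h3]
  have h10 : h 1 ≤ h 0 := hanti (by norm_num) (by norm_num) (by norm_num)
  have h0 : h 0 = 0 := by simp [hh]
  have h1 : h 1 = f y - f x - ⟪g0, v⟫ - L / 2 * ‖v‖ ^ 2 := by
    simp [hh, hv]
  rw [h0, h1] at h10
  linarith

/-- Under L-smoothness, the SGC implies the WGC with the same constant. -/
theorem sgc_implies_wgc
    (n N : ℕ) (hN : 0 < N) (f_ : Fin N → (EuclideanSpace ℝ (Fin n) → ℝ))
    (hdiff : ∀ i, Differentiable ℝ (f_ i))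
    (f : EuclideanSpace ℝ (Fin n) → ℝ)
    (hf : ∀ x, f x = (1 / (N : ℝ)) * ∑ i, f_ i x)
    (L : ℝ) (hL : 0 < L) (hfdiff : Differentiable ℝ f)
    (hlip : ∀ y z : EuclideanSpace ℝ (Fin n), ‖gradient f y - gradient f z‖ ≤ L * ‖y - z‖)
    (fstar : ℝ) (xstar : EuclideanSpace ℝ (Fin n))
    (hfstar : fstar = f xstar) (hmin : ∀ y, fstar ≤ f y)
    (ρ : ℝ) (hρ : 0 < ρ)
    (hSGC : ∀ x, (1 / (N : ℝ)) * ∑ i, ‖gradient (f_ i) x‖ ^ 2 ≤ ρ * ‖gradient f x‖ ^ 2) :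
    ∀ x, (1 / (N : ℝ)) * ∑ i, ‖gradient (f_ i) x‖ ^ 2 ≤ 2 * ρ * L * (f x - fstar) := by
  intro x
  have hgrad : ‖gradient f x‖ ^ 2 ≤ 2 * L * (f x - fstar) := by
    set g := gradient f x with hg
    have hdes := descent_lemma f hfdiff L hL hlip x (x - L⁻¹ • g)
    have hdiffeq : (x - L⁻¹ • g) - x = -(L⁻¹ • g) := by abel
    rw [hdiffeq] at hdes
    have hinner : ⟪g, -(L⁻¹ • g)⟫ = -(L⁻¹ * ‖g‖ ^ 2) := by
      rw [inner_neg_right, real_inner_smul_right, real_inner_self_eq_norm_sq]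
    have hnorm : ‖-(L⁻¹ • g)‖ ^ 2 = L⁻¹ ^ 2 * ‖g‖ ^ 2 := by
      rw [norm_neg, norm_smul]
      simp [abs_of_pos (inv_pos.mpr hL), mul_pow]
    rw [hinner, hnorm] at hdes
    have hm := hmin (x - L⁻¹ • g)
    have hLinv : L * L⁻¹ = 1 := mul_inv_cancel₀ hL.ne'
    have : fstar ≤ f x - L⁻¹ * ‖g‖ ^ 2 + L / 2 * (L⁻¹ ^ 2 * ‖g‖ ^ 2) := le_trans hm hdes
    have hexp : L / 2 * (L⁻¹ ^ 2 * ‖g‖ ^ 2) = L⁻¹ / 2 * ‖g‖ ^ 2 := by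
      field_simp
    rw [hexp] at this
    have h2 : L⁻¹ / 2 * ‖g‖ ^ 2 ≤ f x - fstar := by linarith
    calc ‖g‖ ^ 2 = 2 * L * (L⁻¹ / 2 * ‖g‖ ^ 2) := by field_simp
      _ ≤ 2 * L * (f x - fstar) := by
          exact mul_le_mul_of_nonneg_left h2 (by linarith)
  calc (1 / (N : ℝ)) * ∑ i, ‖gradient (f_ i) x‖ ^ 2 ≤ ρ * ‖gradient f x‖ ^ 2 := hSGC x
    _ ≤ ρ * (2 * L * (f x - fstar)) := mul_le_mul_of_nonneg_left hgrad hρ.le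
    _ = 2 * ρ * L * (f x - fstar) := by ring
end

section
/- Let f₁, …, f_N : ℝⁿ → ℝ be differentiable, with each fᵢ being Lᵢ-smooth, and let L_max = maxᵢ Lᵢ > 0. Let f = (1/N) Σᵢ fᵢ and suppose x* is a global minimizer of f that is also a global minimizer of each fᵢ (minimizer interpolation). Then, writing f* = f(x*), for all x ∈ ℝⁿ: (1/N) Σᵢ ‖∇fᵢ(x)‖² ≤ 2 L_max (f(x) − f*). -/
open Set

private lemma wgc_descent {E : Type*} [NormedAddCommGroup E] [InnerProductSpace ℝ E]
    [CompleteSpace E]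
    (φ : E → ℝ) (L : ℝ) (hd : Differentiable ℝ φ)
    (hlip : ∀ y z : E, ‖gradient φ y - gradient φ z‖ ≤ L * ‖y - z‖)
    (x y : E) :
    φ y ≤ φ x + inner ℝ (gradient φ x) (y - x) + L / 2 * ‖y - x‖ ^ 2 := by
  set v := y - x with hv
  have hline : ∀ t : ℝ, HasDerivAt (fun t : ℝ => x + t • v) v t := fun t => by
    simpa using ((hasDerivAt_id t).smul_const v).const_add x
  have hg : ∀ t : ℝ, HasDerivAt (fun t : ℝ => φ (x + t • v))
      (inner ℝ (gradient φ (x + t • v)) v : ℝ) t := by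
    intro t
    have h1 : HasDerivAt (fun t : ℝ => φ (x + t • v)) _ t := ((hd (x + t • v)).hasGradientAt.hasFDerivAt).comp_hasDerivAt t (hline t)
    simpa [InnerProductSpace.toDual_apply_apply] using h1
  set F : ℝ → ℝ := fun t => φ (x + t • v) - t * inner ℝ (gradient φ x) v
      - L / 2 * ‖v‖ ^ 2 * t ^ 2 with hF
  have hF' : ∀ t : ℝ, HasDerivAt F
      ((inner ℝ (gradient φ (x + t • v)) v : ℝ) - inner ℝ (gradient φ x) v
        - L * ‖v‖ ^ 2 * t) t := by
    intro t
    have h2 : HasDerivAt (fun t : ℝ => t * (inner ℝ (gradient φ x) v : ℝ))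
        (inner ℝ (gradient φ x) v : ℝ) t := by
      simpa using (hasDerivAt_id t).mul_const (inner ℝ (gradient φ x) v : ℝ)
    have h3 : HasDerivAt (fun t : ℝ => L / 2 * ‖v‖ ^ 2 * t ^ 2)
        (L * ‖v‖ ^ 2 * t) t := by
      have := (hasDerivAt_pow 2 t).const_mul (L / 2 * ‖v‖ ^ 2)
      exact this.congr_deriv (by ring)
    exact ((hg t).sub h2).sub h3
  have hderiv : ∀ t ∈ interior (Icc (0:ℝ) 1), deriv F t ≤ 0 := by
    intro t ht
    rw [interior_Icc] at ht
    rw [(hF' t).deriv]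
    have hb : (inner ℝ (gradient φ (x + t • v)) v : ℝ) - inner ℝ (gradient φ x) v
        ≤ L * ‖v‖ ^ 2 * t := by
      rw [← inner_sub_left]
      calc (inner ℝ (gradient φ (x + t • v) - gradient φ x) v : ℝ)
          ≤ ‖gradient φ (x + t • v) - gradient φ x‖ * ‖v‖ := real_inner_le_norm _ _
        _ ≤ (L * ‖x + t • v - x‖) * ‖v‖ := by
            have := hlip (x + t • v) x
            have hvn : (0:ℝ) ≤ ‖v‖ := norm_nonneg _
            nlinarith [hlip (x + t • v) x, norm_nonneg (gradient φ (x + t • v) - gradient φ x)]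
        _ = L * ‖v‖ ^ 2 * t := by
            have : ‖x + t • v - x‖ = t * ‖v‖ := by
              rw [add_sub_cancel_left, norm_smul, Real.norm_eq_abs, abs_of_pos ht.1]
            rw [this]; ring
    linarith
  have hant : AntitoneOn F (Icc (0:ℝ) 1) :=
    antitoneOn_of_deriv_nonpos (convex_Icc 0 1)
      (fun t _ => (hF' t).continuousAt.continuousWithinAt)
      (fun t _ => (hF' t).differentiableAt.differentiableWithinAt) hderiv
  have h01 := hant (left_mem_Icc.2 zero_le_one) (right_mem_Icc.2 zero_le_one) zero_le_one
  have hy : x + (1:ℝ) • v = y := by simp [hv]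
  simp only [hF, hy, zero_smul, add_zero, one_mul] at h01
  nlinarith [h01]

private lemma wgc_grad_sq {E : Type*} [NormedAddCommGroup E] [InnerProductSpace ℝ E]
    [CompleteSpace E]
    (φ : E → ℝ) (L : ℝ) (hL : 0 < L) (hd : Differentiable ℝ φ)
    (hlip : ∀ y z : E, ‖gradient φ y - gradient φ z‖ ≤ L * ‖y - z‖)
    (xstar : E) (hmin : ∀ y, φ xstar ≤ φ y) (x : E) :
    ‖gradient φ x‖ ^ 2 ≤ 2 * L * (φ x - φ xstar) := by
  have hdesc := wgc_descent φ L hd hlip x (x - L⁻¹ • gradient φ x)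
  have hmin' := hmin (x - L⁻¹ • gradient φ x)
  rw [sub_sub_cancel_left] at hdesc
  rw [inner_neg_right, real_inner_smul_right, real_inner_self_eq_norm_sq, norm_neg,
    norm_smul, Real.norm_eq_abs, abs_of_pos (inv_pos.2 hL)] at hdesc
  have h2 : (L⁻¹ * ‖gradient φ x‖) ^ 2 = L⁻¹ * L⁻¹ * ‖gradient φ x‖ ^ 2 := by ring
  rw [h2] at hdesc
  have hL0 : L ≠ 0 := hL.ne'
  have e : L / 2 * (L⁻¹ * L⁻¹ * ‖gradient φ x‖ ^ 2) = L⁻¹ * ‖gradient φ x‖ ^ 2 / 2 := by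
    field_simp
  rw [e] at hdesc
  have h := hmin'.trans hdesc
  have h2' : L⁻¹ * ‖gradient φ x‖ ^ 2 / 2 ≤ φ x - φ xstar := by linarith
  have h3 := mul_le_mul_of_nonneg_left h2' (by linarith : (0:ℝ) ≤ 2 * L)
  have e2 : 2 * L * (L⁻¹ * ‖gradient φ x‖ ^ 2 / 2) = ‖gradient φ x‖ ^ 2 := by
    field_simp
  linarith [e2 ▸ h3]

/-- Minimizer interpolation with componentwise smoothness implies the WGC
with ρL = L_max. -/
theorem minimizer_interpolation_implies_wgc
    (n N : ℕ) (hN : 0 < N) (f_ : Fin N → (EuclideanSpace ℝ (Fin n) → ℝ))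
    (L : Fin N → ℝ)
    (hdiff : ∀ i, Differentiable ℝ (f_ i))
    (hlip : ∀ i, ∀ y z : EuclideanSpace ℝ (Fin n),
      ‖gradient (f_ i) y - gradient (f_ i) z‖ ≤ L i * ‖y - z‖)
    (Lmax : ℝ) (hLmax : IsGreatest (Set.range L) Lmax) (hLmaxpos : 0 < Lmax)
    (f : EuclideanSpace ℝ (Fin n) → ℝ)
    (hf : ∀ x, f x = (1 / (N : ℝ)) * ∑ i, f_ i x)
    (xstar : EuclideanSpace ℝ (Fin n))
    (hmin : ∀ y, f xstar ≤ f y)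
    (hinterp : ∀ i, ∀ y, f_ i xstar ≤ f_ i y) :
    ∀ x, (1 / (N : ℝ)) * ∑ i, ‖gradient (f_ i) x‖ ^ 2 ≤ 2 * Lmax * (f x - f xstar) := by
  intro x
  have hkey : ∀ i, ‖gradient (f_ i) x‖ ^ 2 ≤ 2 * Lmax * (f_ i x - f_ i xstar) := by
    intro i
    refine wgc_grad_sq (f_ i) Lmax hLmaxpos (hdiff i) (fun y z => ?_) xstar (hinterp i) x
    have hLe : L i ≤ Lmax := hLmax.2 ⟨i, rfl⟩
    calc ‖gradient (f_ i) y - gradient (f_ i) z‖ ≤ L i * ‖y - z‖ := hlip i y z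
      _ ≤ Lmax * ‖y - z‖ := mul_le_mul_of_nonneg_right hLe (norm_nonneg _)
  have hsum : ∑ i, ‖gradient (f_ i) x‖ ^ 2
      ≤ ∑ i, 2 * Lmax * (f_ i x - f_ i xstar) := Finset.sum_le_sum fun i _ => hkey i
  have hNpos : (0:ℝ) < (N:ℝ) := Nat.cast_pos.2 hN
  have h1N : (0:ℝ) < 1 / (N:ℝ) := by positivity
  calc (1 / (N : ℝ)) * ∑ i, ‖gradient (f_ i) x‖ ^ 2
      ≤ (1 / (N : ℝ)) * ∑ i, 2 * Lmax * (f_ i x - f_ i xstar) :=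
        mul_le_mul_of_nonneg_left hsum h1N.le
    _ = 2 * Lmax * (f x - f xstar) := by
        rw [hf x, hf xstar, ← mul_sub, ← Finset.sum_sub_distrib, ← Finset.mul_sum]
        ring
end

section
/- Let f : ℝⁿ → ℝ be differentiable with L-Lipschitz-continuous gradient (L > 0), and let φ : ℝⁿ → ℝ be differentiable and bounded below by m, i.e., φ(y) ≥ m for all y. Fix x, d ∈ ℝⁿ, set g = ∇φ(x), and suppose ‖d‖ ≤ c₁‖g‖ and ⟨d, g⟩ ≤ −c₂‖g‖² for constants c₁, c₂ > 0. Let γ ∈ (0,1) and α > 0 satisfy the Armijo condition φ(x + α·d) ≤ φ(x) + γα⟨d, g⟩. Then (f(x + α·d) − f(x))/α ≤ ⟨∇f(x), d⟩ + (L c₁²/(2γc₂)) (φ(x) − m). -/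
open InnerProductSpace

theorem descent_lemma_aux
    (n : ℕ) (f : EuclideanSpace ℝ (Fin n) → ℝ) (L : ℝ) (hL : 0 < L)
    (hfdiff : Differentiable ℝ f)
    (hflip : ∀ y z : EuclideanSpace ℝ (Fin n), ‖gradient f y - gradient f z‖ ≤ L * ‖y - z‖)
    (x v : EuclideanSpace ℝ (Fin n)) :
    f (x + v) ≤ f x + (inner ℝ (gradient f x) v : ℝ) + L / 2 * ‖v‖ ^ 2 := by
  set g : ℝ → ℝ := fun t => f (x + t • v) - t * (inner ℝ (gradient f x) v : ℝ)
      - L / 2 * ‖v‖ ^ 2 * t ^ 2 with hg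
  have hderiv : ∀ t : ℝ, HasDerivAt g
      ((inner ℝ (gradient f (x + t • v)) v : ℝ) - (inner ℝ (gradient f x) v : ℝ)
        - L * ‖v‖ ^ 2 * t) t := by
    intro t
    have hline : HasDerivAt (fun t : ℝ => x + t • v) v t := by
      simpa using ((hasDerivAt_id t).smul_const v).const_add x
    have h1 : HasDerivAt (fun t : ℝ => f (x + t • v))
        ((inner ℝ (gradient f (x + t • v)) v : ℝ)) t := by
      have := ((hfdiff (x + t • v)).hasGradientAt.hasFDerivAt).comp_hasDerivAt t hline
      exact this.congr_deriv (by simp [InnerProductSpace.toDual_apply_apply])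
    have h2 : HasDerivAt (fun t : ℝ => t * (inner ℝ (gradient f x) v : ℝ))
        ((inner ℝ (gradient f x) v : ℝ)) t := by
      simpa using (hasDerivAt_id t).mul_const ((inner ℝ (gradient f x) v : ℝ))
    have h3 : HasDerivAt (fun t : ℝ => L / 2 * ‖v‖ ^ 2 * t ^ 2)
        (L * ‖v‖ ^ 2 * t) t := by
      have := ((hasDerivAt_pow 2 t)).const_mul (L / 2 * ‖v‖ ^ 2)
      exact this.congr_deriv (by ring)
    exact (h1.sub h2).sub h3
  have hdiffg : Differentiable ℝ g := fun t => (hderiv t).differentiableAt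
  have hanti : AntitoneOn g (Set.Icc (0:ℝ) 1) := by
    apply antitoneOn_of_deriv_nonpos (convex_Icc 0 1) hdiffg.continuous.continuousOn
      hdiffg.differentiableOn
    intro t ht
    rw [interior_Icc] at ht
    rw [(hderiv t).deriv]
    have h1 : (inner ℝ (gradient f (x + t • v)) v : ℝ) - (inner ℝ (gradient f x) v : ℝ)
        ≤ L * t * ‖v‖ ^ 2 := by
      have := real_inner_le_norm (gradient f (x + t • v) - gradient f x) v
      rw [inner_sub_left] at this
      have h2 := hflip (x + t • v) x
      have h3 : ‖x + t • v - x‖ = t * ‖v‖ := by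
        rw [add_sub_cancel_left, norm_smul, Real.norm_eq_abs, abs_of_pos ht.1]
      rw [h3] at h2
      nlinarith [norm_nonneg v, norm_nonneg (gradient f (x + t • v) - gradient f x)]
    nlinarith
  have := hanti (Set.mem_Icc.mpr ⟨le_refl 0, zero_le_one⟩)
      (Set.mem_Icc.mpr ⟨zero_le_one, le_refl 1⟩) zero_le_one
  simp only [hg, one_smul, one_mul, one_pow, zero_smul, zero_mul, mul_zero, add_zero,
    sub_zero, mul_one, ne_eq, OfNat.ofNat_ne_zero, not_false_eq_true, zero_pow] at this
  linarith


/-- Per-iteration descent estimate on the true objective from the Armijo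
condition on the (stochastic) objective φ. -/
theorem descent_estimate_from_armijo
    (n : ℕ) (f φ : EuclideanSpace ℝ (Fin n) → ℝ) (L : ℝ) (hL : 0 < L)
    (hfdiff : Differentiable ℝ f)
    (hflip : ∀ y z : EuclideanSpace ℝ (Fin n), ‖gradient f y - gradient f z‖ ≤ L * ‖y - z‖)
    (hφdiff : Differentiable ℝ φ)
    (m : ℝ) (hm : ∀ y, m ≤ φ y)
    (x d : EuclideanSpace ℝ (Fin n)) (c₁ c₂ : ℝ) (hc₁ : 0 < c₁) (hc₂ : 0 < c₂)
    (hd1 : ‖d‖ ≤ c₁ * ‖gradient φ x‖)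
    (hd2 : (inner ℝ d (gradient φ x) : ℝ) ≤ -c₂ * ‖gradient φ x‖ ^ 2)
    (γ : ℝ) (hγ : γ ∈ Set.Ioo (0 : ℝ) 1)
    (α : ℝ) (hα : 0 < α)
    (harmijo : φ (x + α • d) ≤ φ x + γ * α * (inner ℝ d (gradient φ x) : ℝ)) :
    (f (x + α • d) - f x) / α ≤
      (inner ℝ (gradient f x) d : ℝ) + (L * c₁ ^ 2 / (2 * γ * c₂)) * (φ x - m) := by
  obtain ⟨hγ0, hγ1⟩ := hγ
  set G := gradient φ x with hGdef
  have hmm := hm (x + α • d)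
  have hG2 : γ * α * c₂ * ‖G‖ ^ 2 ≤ φ x - m := by
    have h2 : γ * α * (inner ℝ d G : ℝ) ≤ γ * α * (-c₂ * ‖G‖ ^ 2) := by
      apply mul_le_mul_of_nonneg_left hd2 (by positivity)
    nlinarith
  have hdesc := descent_lemma_aux n f L hL hfdiff hflip x (α • d)
  rw [real_inner_smul_right] at hdesc
  have hnorm : ‖α • d‖ ^ 2 = α ^ 2 * ‖d‖ ^ 2 := by
    rw [norm_smul, Real.norm_eq_abs, abs_of_pos hα, mul_pow]
  rw [hnorm] at hdesc
  have hd1sq : ‖d‖ ^ 2 ≤ c₁ ^ 2 * ‖G‖ ^ 2 := by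
    nlinarith [norm_nonneg d, norm_nonneg G]
  have hb : L / 2 * α * ‖d‖ ^ 2 ≤ L * c₁ ^ 2 / (2 * γ * c₂) * (φ x - m) := by
    rw [show L * c₁ ^ 2 / (2 * γ * c₂) * (φ x - m) = L * c₁ ^ 2 * (φ x - m) / (2 * γ * c₂) by
      ring, le_div_iff₀ (by positivity)]
    nlinarith [mul_le_mul_of_nonneg_left hG2 (mul_nonneg hL.le (sq_nonneg c₁)),
      mul_le_mul_of_nonneg_left hd1sq
        (by positivity : (0:ℝ) ≤ L * α * γ * c₂)]
  rw [div_le_iff₀ hα]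
  nlinarith
end
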